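/- In a sorted linked list with logical deletion (marking), if every physically reachable unmarked node was inserted between correctly located predecessors, then the keys of unmarked nodes reachable from the head form a strictly increasing sequence; marking a node preserves this invariant, and physically unlinking a marked node preserves both the invariant and the set of unmarked reachable keys. -/

import Mathlib

/-- A list node: an integer key together with a mark bit. -/
abbrev HNode := ℤ × Bool

/-- Keys of the reachable nodes. -/
def keys (l : List HNode) : List ℤ := l.map Prod.fst

/-- Abstraction: set of keys of unmarked reachable nodes. -/
def absSet (l : List HNode) : Finset ℤ :=
  ((l.filter (fun n => n.2 = false)).map Prod.fst).toFinset

lemma absSet_append (a b : List HNode) : absSet (a ++ b) = absSet a ∪ absSet b := by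
  simp [absSet, List.filter_append]

lemma absSet_cons (x : HNode) (b : List HNode) :
    absSet (x :: b) = if x.2 = false then insert x.1 (absSet b) else absSet b := by
  by_cases h : x.2 = false <;> simp [absSet, List.filter_cons, h]

lemma mem_absSet {a : ℤ} {l : List HNode} (h : a ∈ absSet l) : a ∈ keys l := by
  simp only [absSet, List.mem_toFinset, List.mem_map, List.mem_filter] at h
  obtain ⟨x, ⟨hx, _⟩, rfl⟩ := h
  exact List.mem_map_of_mem hx

/-- In the Harris-style list, if the reachable keys are strictly increasing:
marking a reachable node preserves the sortedness invariant and removes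
exactly its key from the abstraction, and physically unlinking a marked node
preserves the invariant and leaves the abstraction unchanged. -/
theorem harris_list_invariants (l : List HNode) (i : Fin l.length)
    (hsorted : (keys l).Chain' (· < ·)) :
    ((keys (l.set i ((l.get i).1, true))).Chain' (· < ·)) ∧
    ((l.get i).2 = false →
      absSet (l.set i ((l.get i).1, true)) = (absSet l).erase (l.get i).1) ∧
    ((l.get i).2 = true →
      (keys (l.eraseIdx i)).Chain' (· < ·) ∧
      absSet (l.eraseIdx i) = absSet l) := by
  obtain ⟨i, hi⟩ := i
  set x := l.get ⟨i, hi⟩ with hx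
  have hdecomp : l = l.take i ++ x :: l.drop (i + 1) := by
    conv_lhs => rw [← List.take_append_drop i l]
    congr 1
    rw [hx, List.get_eq_getElem, List.getElem_cons_drop]
  set A := l.take i
  set B := l.drop (i + 1)
  have hset : l.set i (x.1, true) = A ++ (x.1, true) :: B := by
    rw [List.set_eq_take_cons_drop _ hi]
  have herase : l.eraseIdx i = A ++ B := List.eraseIdx_eq_take_drop_succ l i
  have hkeys : keys l = keys A ++ x.1 :: keys B := by
    conv_lhs => rw [hdecomp]
    simp [keys]
  have hpw : (keys l).Pairwise (· < ·) := List.isChain_iff_pairwise.mp hsorted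
  refine ⟨?_, ?_, ?_⟩
  · have : keys (l.set i (x.1, true)) = keys l := by
      rw [hset, hkeys]; simp [keys]
    rw [this]; exact hsorted
  · intro hmark
    have hnotA : x.1 ∉ absSet A := by
      intro h
      have := mem_absSet h
      rw [hkeys] at hpw
      have := (List.pairwise_append.mp hpw).2.2 _ this x.1 List.mem_cons_self
      exact lt_irrefl _ this
    have hnotB : x.1 ∉ absSet B := by
      intro h
      have := mem_absSet h
      rw [hkeys] at hpw
      have := List.rel_of_pairwise_cons (List.pairwise_append.mp hpw).2.1 this
      exact lt_irrefl _ this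
    rw [hset, absSet_append, absSet_cons]
    conv_rhs => rw [hdecomp, absSet_append, absSet_cons]
    rw [if_neg (show ¬((true:Bool) = false) by decide), hmark, if_pos rfl]
    rw [Finset.erase_union_distrib, Finset.erase_insert hnotB,
      Finset.erase_eq_of_notMem hnotA]
  · intro hmark
    have hsub : List.Sublist (keys (A ++ B)) (keys l) := by
      rw [hkeys]
      simp only [keys, List.map_append]
      exact (List.sublist_cons_self _ _).append_left _
    constructor
    · show (keys (l.eraseIdx i)).Chain' (· < ·)
      rw [herase]
      exact List.isChain_iff_pairwise.mpr (hpw.sublist hsub)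
    · show absSet (l.eraseIdx i) = absSet l
      rw [herase, absSet_append]
      conv_rhs => rw [hdecomp, absSet_append, absSet_cons]
      simp [hmark]
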